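/- The relation S < T on stationary subsets of a regular uncountable cardinal κ, defined by 'for all but a nonstationary set of α ∈ T, S ∩ α is stationary in α', is transitive. -/

import Mathlib

/-- `C` is closed and unbounded in the ordinal `o`. -/
def IsClubIn (C : Set Ordinal) (o : Ordinal) : Prop :=
  (∀ α, α < o → 0 < α → (∀ β < α, ∃ γ ∈ C, β < γ ∧ γ < α) → α ∈ C) ∧
  (∀ β, β < o → ∃ γ ∈ C, β < γ ∧ γ < o)

/-- `S` is stationary in the ordinal `o`: it meets every club in `o`. -/
def IsStatIn (S : Set Ordinal) (o : Ordinal) : Prop :=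
  ∀ C, IsClubIn C o → (S ∩ C).Nonempty

/-- The trace of `S` below `o`: points `α < o` where `S ∩ α` is stationary in `α`. -/
def statTrace (S : Set Ordinal) (o : Ordinal) : Set Ordinal :=
  {α | α < o ∧ IsStatIn (S ∩ Set.Iio α) α}

/-- `S` reflects fully in `T` (the relation `S < T`):
`{α ∈ T : S ∩ α not stationary in α}` is nonstationary in `o`. -/
def sLT (o : Ordinal) (S T : Set Ordinal) : Prop :=
  ¬ IsStatIn (T \ statTrace S o) o

/-- The regular cardinals below `o`. -/
def RegBelow (o : Ordinal) : Set Ordinal :=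
  {α | α < o ∧ ∃ c : Cardinal, c.IsRegular ∧ c.ord = α}

/-- The singular ordinals below `o`. -/
def SingBelow (o : Ordinal) : Set Ordinal :=
  {α | α < o ∧ ¬ ∃ c : Cardinal, c.IsRegular ∧ c.ord = α}

/-- `F` is a proper filter on subsets of `Iio o` extending the club filter. -/
def IsSetFilterOn (F : Set (Set Ordinal)) (o : Ordinal) : Prop :=
  (∀ X ∈ F, X ⊆ Set.Iio o) ∧ (Set.Iio o ∈ F) ∧ (∅ ∉ F) ∧
  (∀ X ∈ F, ∀ Y ∈ F, X ∩ Y ∈ F) ∧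
  (∀ X ∈ F, ∀ Y, Y ⊆ Set.Iio o → X ⊆ Y → Y ∈ F) ∧
  (∀ C, IsClubIn C o → Set.Iio o ∩ C ∈ F)

/-- `S` is `F`-positive: the complement of `S` (inside `Iio o`) is not in `F`. -/
def FPosIn (F : Set (Set Ordinal)) (S : Set Ordinal) (o : Ordinal) : Prop :=
  (Set.Iio o \ S) ∉ F

namespace SLTAux

/-- There is no strictly increasing cofinal `ω`-sequence in `α`. -/
def NoOmegaSeq (α : Ordinal) : Prop :=
  ¬ ∃ f : ℕ → Ordinal, StrictMono f ∧ (∀ n, f n < α) ∧ ∀ β < α, ∃ n, β < f n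

theorem iSup_lt_of_no {α : Ordinal} (hno : NoOmegaSeq α) {w : ℕ → Ordinal}
    (hmono : StrictMono w) (hlt : ∀ n, w n < α) : iSup w < α := by
  rcases lt_or_eq_of_le (Ordinal.iSup_le fun n => (hlt n).le) with h | h
  · exact h
  · exact absurd ⟨w, hmono, hlt, fun β hβ => Ordinal.lt_iSup_iff.1 (h ▸ hβ)⟩ hno

/-- The range of a strictly increasing cofinal ω-sequence is club. -/
theorem range_omega_club {f : ℕ → Ordinal} {α : Ordinal} (hmono : StrictMono f)
    (hlt : ∀ n, f n < α) (hcof : ∀ β < α, ∃ n, β < f n) :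
    IsClubIn (Set.range f) α := by
  constructor
  · intro x hx h0 hlim
    exfalso
    by_cases hall : ∀ n, f n < x
    · obtain ⟨n, hn⟩ := hcof x hx
      exact absurd hn (not_lt.2 (hall n).le)
    · push_neg at hall
      obtain ⟨m, hm⟩ := hall
      -- take least such m
      have hex : ∃ m, x ≤ f m := ⟨m, hm⟩
      set m₀ := Nat.find hex with hm₀
      have hle : x ≤ f m₀ := Nat.find_spec hex
      rcases Nat.eq_zero_or_pos m₀ with h0' | hpos
      · obtain ⟨γ, ⟨j, rfl⟩, _, hγx⟩ := hlim 0 h0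
        have : x ≤ f j := h0' ▸ hle |>.trans (hmono.monotone (Nat.zero_le j))
        exact absurd hγx (not_lt.2 this)
      · obtain ⟨k, hk⟩ := Nat.exists_eq_succ_of_ne_zero hpos.ne'
        have hfk : f k < x := lt_of_not_ge (Nat.find_min hex (by omega))
        rw [hk] at hle
        obtain ⟨γ, ⟨j, rfl⟩, hfkγ, hγx⟩ := hlim (f k) hfk
        have hjk : k < j := hmono.lt_iff_lt.1 hfkγ
        have : x ≤ f j := hle.trans (hmono.monotone hjk)
        exact absurd hγx (not_lt.2 this)
  · intro β hβ
    obtain ⟨n, hn⟩ := hcof β hβ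
    exact ⟨f n, ⟨n, rfl⟩, hn, hlt n⟩

/-- The least element of `Z` above `x` (or `x+1` as a fallback). -/
noncomputable def nextIn (Z : Set Ordinal) (x : Ordinal) : Ordinal :=
  max (x + 1) (sInf {y | y ∈ Z ∧ x < y})

theorem lt_nextIn (Z : Set Ordinal) (x : Ordinal) : x < nextIn Z x :=
  lt_of_lt_of_le (lt_add_one x) (le_max_left _ _)

theorem nextIn_spec {Z : Set Ordinal} {x β : Ordinal} (h : ∃ y ∈ Z, x < y ∧ y < β) :
    nextIn Z x ∈ Z ∧ nextIn Z x < β := by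
  obtain ⟨y, hyZ, hxy, hyβ⟩ := h
  have hne : Set.Nonempty {y | y ∈ Z ∧ x < y} := ⟨y, hyZ, hxy⟩
  have hmem := csInf_mem hne
  have h2 : x + 1 ≤ sInf {y | y ∈ Z ∧ x < y} := by
    rw [Ordinal.add_one_eq_succ]; exact Order.succ_le_of_lt hmem.2
  have heq : nextIn Z x = sInf {y | y ∈ Z ∧ x < y} := max_eq_right h2
  refine ⟨heq ▸ hmem.1, ?_⟩
  rw [heq]
  exact lt_of_le_of_lt (csInf_le' ⟨hyZ, hxy⟩) hyβ

theorem nextIn_mono (Z : Set Ordinal) : Monotone (nextIn Z) := by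
  intro x x' hxx'
  have hsucc : x + 1 ≤ x' + 1 := add_le_add_left hxx' 1
  rcases Set.eq_empty_or_nonempty {y | y ∈ Z ∧ x' < y} with he | hne
  · rcases Set.eq_empty_or_nonempty {y | y ∈ Z ∧ x < y} with he2 | hne2
    · unfold nextIn; rw [he, he2]; exact max_le_max hsucc le_rfl
    · have hmem := csInf_mem hne2
      have hle : sInf {y | y ∈ Z ∧ x < y} ≤ x' := by
        by_contra hgt
        push_neg at hgt
        exact absurd (Set.eq_empty_iff_forall_notMem.1 he (sInf {y | y ∈ Z ∧ x < y}))
          (not_not.2 ⟨hmem.1, hgt⟩)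
      have : nextIn Z x ≤ x' + 1 := max_le hsucc (hle.trans (le_self_add))
      exact this.trans (le_max_left _ _)
  · have : sInf {y | y ∈ Z ∧ x < y} ≤ sInf {y | y ∈ Z ∧ x' < y} :=
      le_csInf hne fun b hb => csInf_le' ⟨hb.1, lt_of_le_of_lt hxx' hb.2⟩
    exact max_le_max hsucc this

theorem nextIn_lt {Z : Set Ordinal} {o : Ordinal} (hZ : Z ⊆ Set.Iio o) (ho : Order.IsSuccLimit o)
    {x : Ordinal} (hx : x < o) : nextIn Z x < o := by
  have h1 : x + 1 < o := by rw [Ordinal.add_one_eq_succ]; exact ho.succ_lt hx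
  rcases Set.eq_empty_or_nonempty {y | y ∈ Z ∧ x < y} with he | hne
  · unfold nextIn; rw [he, Ordinal.sInf_empty]; simpa using h1
  · exact max_lt h1 (hZ (csInf_mem hne).1)

/-- Iterated alternation: one step into `Z`, then one step into `W`. -/
noncomputable def iseq (Z W : Set Ordinal) (δ : Ordinal) : ℕ → Ordinal
  | 0 => δ
  | n + 1 => nextIn W (nextIn Z (iseq Z W δ n))

theorem iseq_strictMono (Z W : Set Ordinal) (δ : Ordinal) : StrictMono (iseq Z W δ) :=
  strictMono_nat_of_lt_succ fun n =>
    lt_trans (lt_nextIn Z (iseq Z W δ n)) (lt_nextIn W _)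

theorem iseq_mono_left (Z W : Set Ordinal) (n : ℕ) :
    Monotone fun δ => iseq Z W δ n := by
  induction n with
  | zero => exact fun a b h => h
  | succ n ih => exact fun a b h => (nextIn_mono W) ((nextIn_mono Z) (ih h))

/-- The canonical closure function. -/
noncomputable def Fop (Z W : Set Ordinal) (δ : Ordinal) : Ordinal := ⨆ n, iseq Z W δ n

theorem Fop_mono (Z W : Set Ordinal) : Monotone (Fop Z W) := fun a b h => by
  show (⨆ n, iseq Z W a n) ≤ ⨆ n, iseq Z W b n
  exact Ordinal.iSup_le fun n => le_trans (iseq_mono_left Z W n h) (Ordinal.le_iSup (iseq Z W b) n)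

theorem Fop_lt {Z W : Set Ordinal} {o : Ordinal} (hZ : Z ⊆ Set.Iio o) (hW : W ⊆ Set.Iio o)
    (ho : Order.IsSuccLimit o) (hno : NoOmegaSeq o) {δ : Ordinal} (hδ : δ < o) : Fop Z W δ < o := by
  have hlt : ∀ n, iseq Z W δ n < o := by
    intro n
    induction n with
    | zero => exact hδ
    | succ n ih => exact nextIn_lt hW ho (nextIn_lt hZ ho ih)
  exact iSup_lt_of_no hno (iseq_strictMono Z W δ) hlt

/-- The set of closure points of a monotone `F` is club. -/
theorem fix_club {o : Ordinal} (ho : Order.IsSuccLimit o) (hno : NoOmegaSeq o)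
    {F : Ordinal → Ordinal} (hmono : Monotone F) (hlt : ∀ x < o, F x < o) :
    IsClubIn {x | x < o ∧ ∀ δ < x, F δ < x} o := by
  constructor
  · intro x hx h0 hlim
    refine ⟨hx, fun δ hδ => ?_⟩
    obtain ⟨γ, hγ, hδγ, hγx⟩ := hlim δ hδ
    exact lt_trans (hγ.2 δ hδγ) hγx
  · intro β hβ
    -- iterate x ↦ max (x+1) (F x + 1)
    set g : ℕ → Ordinal := fun n => Nat.rec (β + 1) (fun _ x => max (x + 1) (F x + 1)) n with hg
    have hglt : ∀ n, g n < o := by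
      intro n
      induction n with
      | zero =>
        show β + 1 < o
        rw [Ordinal.add_one_eq_succ]; exact ho.succ_lt hβ
      | succ n ih =>
        show max (g n + 1) (F (g n) + 1) < o
        apply max_lt
        · rw [Ordinal.add_one_eq_succ]; exact ho.succ_lt ih
        · rw [Ordinal.add_one_eq_succ]; exact ho.succ_lt (hlt _ ih)
    have hgmono : StrictMono g := strictMono_nat_of_lt_succ fun n =>
      lt_of_lt_of_le (lt_add_one _) (le_max_left _ _)
    have hsup := iSup_lt_of_no hno hgmono hglt
    refine ⟨iSup g, ⟨hsup, fun δ hδ => ?_⟩, ?_, hsup⟩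
    · obtain ⟨n, hn⟩ := Ordinal.lt_iSup_iff.1 hδ
      have : F δ ≤ F (g n) := hmono hn.le
      have h2 : F (g n) < g (n + 1) :=
        lt_of_lt_of_le (lt_add_one _) (le_max_right _ _)
      exact lt_of_le_of_lt this (lt_of_lt_of_le h2 (Ordinal.le_iSup g (n + 1)))
    · exact lt_of_lt_of_le (lt_add_one β) (Ordinal.le_iSup g 0)

/-- Intersection of two clubs is club (when there is no cofinal ω-sequence). -/
theorem inter_club {o : Ordinal} (hno : NoOmegaSeq o) {C D : Set Ordinal}
    (hC : IsClubIn C o) (hD : IsClubIn D o) : IsClubIn (C ∩ D) o := by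
  constructor
  · intro x hx h0 hlim
    constructor
    · exact hC.1 x hx h0 fun β hβ => by
        obtain ⟨γ, hγ, h1, h2⟩ := hlim β hβ; exact ⟨γ, hγ.1, h1, h2⟩
    · exact hD.1 x hx h0 fun β hβ => by
        obtain ⟨γ, hγ, h1, h2⟩ := hlim β hβ; exact ⟨γ, hγ.2, h1, h2⟩
  · intro β hβ
    set g : ℕ → Ordinal := fun n => Nat.rec β (fun _ x => nextIn D (nextIn C x)) n with hg
    have hglt : ∀ n, g n < o := by
      intro n
      induction n with
      | zero => exact hβ
      | succ n ih =>
        exact (nextIn_spec (hD.2 _ (nextIn_spec (hC.2 _ ih)).2)).2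
    have hgC : ∀ n, nextIn C (g n) ∈ C ∧ nextIn C (g n) < o := fun n =>
      nextIn_spec (hC.2 _ (hglt n))
    have hgD : ∀ n, g (n + 1) ∈ D := fun n => (nextIn_spec (hD.2 _ (hgC n).2)).1
    have hgmono : StrictMono g := strictMono_nat_of_lt_succ fun n =>
      lt_trans (lt_nextIn C (g n)) (lt_nextIn D _)
    have hsup := iSup_lt_of_no hno hgmono hglt
    have hgle : ∀ n, g n ≤ iSup g := fun n => Ordinal.le_iSup g n
    have h0 : 0 < iSup g := lt_of_le_of_lt (zero_le (a := β)) (lt_of_lt_of_le (hgmono (Nat.lt_succ_self 0)) (hgle 1))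
    have hcof : ∀ β' < iSup g, ∃ n, β' < g n := fun β' h => Ordinal.lt_iSup_iff.1 h
    refine ⟨iSup g, ⟨?_, ?_⟩, lt_of_lt_of_le (lt_trans (lt_nextIn C β) (lt_nextIn D _)) (hgle 1), hsup⟩
    · refine hC.1 _ hsup h0 fun β' hβ' => ?_
      obtain ⟨n, hn⟩ := hcof β' hβ'
      refine ⟨nextIn C (g n), (hgC n).1, lt_trans hn (lt_nextIn C _), ?_⟩
      exact lt_of_lt_of_le (show nextIn C (g n) < g (n + 1) from lt_nextIn D _) (hgle (n + 1))
    · refine hD.1 _ hsup h0 fun β' hβ' => ?_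
      obtain ⟨n, hn⟩ := hcof β' hβ'
      exact ⟨g (n + 1), hgD n, lt_of_lt_of_le hn (hgmono (Nat.lt_succ_self n)).le,
        lt_of_lt_of_le (hgmono (Nat.lt_succ_self (n+1))) (hgle (n+2))⟩

/-- Points `< o` that are limits of points of `D`. -/
def accBelow (D : Set Ordinal) (o : Ordinal) : Set Ordinal :=
  {x | x < o ∧ 0 < x ∧ ∀ β < x, ∃ γ ∈ D, β < γ ∧ γ < x}

theorem acc_club {o : Ordinal} (hno : NoOmegaSeq o) {D : Set Ordinal}
    (hD : IsClubIn D o) : IsClubIn (accBelow D o) o := by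
  constructor
  · intro x hx h0 hlim
    refine ⟨hx, h0, fun β hβ => ?_⟩
    obtain ⟨γ, hγ, hβγ, hγx⟩ := hlim β hβ
    obtain ⟨γ', hγ', hβγ', hγ'γ⟩ := hγ.2.2 β hβγ
    exact ⟨γ', hγ', hβγ', lt_trans hγ'γ hγx⟩
  · intro β hβ
    set g : ℕ → Ordinal := fun n => Nat.rec β (fun _ x => nextIn D x) n with hg
    have hglt : ∀ n, g n < o := by
      intro n
      induction n with
      | zero => exact hβ
      | succ n ih => exact (nextIn_spec (hD.2 _ ih)).2
    have hgD : ∀ n, g (n + 1) ∈ D := fun n => (nextIn_spec (hD.2 _ (hglt n))).1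
    have hgmono : StrictMono g := strictMono_nat_of_lt_succ fun n => lt_nextIn D (g n)
    have hsup := iSup_lt_of_no hno hgmono hglt
    have hgle : ∀ n, g n ≤ iSup g := fun n => Ordinal.le_iSup g n
    refine ⟨iSup g, ⟨hsup, ?_, fun β' hβ' => ?_⟩,
      lt_of_lt_of_le (lt_nextIn D β) (hgle 1), hsup⟩
    · exact lt_of_le_of_lt (zero_le (a := β)) (lt_of_lt_of_le (hgmono (Nat.lt_succ_self 0)) (hgle 1))
    · obtain ⟨n, hn⟩ := Ordinal.lt_iSup_iff.1 hβ'
      exact ⟨g (n + 1), hgD n, lt_of_lt_of_le hn (hgmono (Nat.lt_succ_self n)).le,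
        lt_of_lt_of_le (hgmono (Nat.lt_succ_self (n + 1))) (hgle (n + 2))⟩

/-- Restricting a set that is closed in `o` to an accumulation point `α` gives a club in `α`. -/
theorem club_restrict {C : Set Ordinal} {o α : Ordinal}
    (hcl : ∀ x, x < o → 0 < x → (∀ β < x, ∃ γ ∈ C, β < γ ∧ γ < x) → x ∈ C)
    (hα : α ∈ accBelow C o) : IsClubIn (C ∩ Set.Iio α) α := by
  obtain ⟨hαo, -, hacc⟩ := hα
  constructor
  · intro x hx h0 hlim
    refine ⟨hcl x (lt_trans hx hαo) h0 fun β hβ => ?_, hx⟩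
    obtain ⟨γ, hγ, h1, h2⟩ := hlim β hβ
    exact ⟨γ, hγ.1, h1, h2⟩
  · intro β hβ
    obtain ⟨γ, hγ, h1, h2⟩ := hacc β hβ
    exact ⟨γ, ⟨hγ, h2⟩, h1, h2⟩

theorem iseq_succ (Z W : Set Ordinal) (δ : Ordinal) (n : ℕ) :
    iseq Z W δ (n + 1) = nextIn W (nextIn Z (iseq Z W δ n)) := rfl

end SLTAux


/-- The full-reflection relation `S < T` on stationary subsets of a regular
uncountable cardinal is transitive. -/
theorem sLT_trans (κ : Cardinal) (hreg : κ.IsRegular) (hunc : Cardinal.aleph0 < κ)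
    (S T U : Set Ordinal)
    (hS : S ⊆ Set.Iio κ.ord) (hSstat : IsStatIn S κ.ord)
    (hT : T ⊆ Set.Iio κ.ord) (hTstat : IsStatIn T κ.ord)
    (hU : U ⊆ Set.Iio κ.ord) (hUstat : IsStatIn U κ.ord)
    (hST : sLT κ.ord S T) (hTU : sLT κ.ord T U) :
    sLT κ.ord S U := by
  classical
  open SLTAux in
  intro hstat
  set o := κ.ord with ho
  have holim : Order.IsSuccLimit o := Cardinal.isSuccLimit_ord hreg.aleph0_le
  have hno : NoOmegaSeq o := by
    rintro ⟨f, hf, hlt, hcof⟩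
    have h1 : iSup f < o :=
      Cardinal.iSup_lt_ord_lift_of_isRegular hreg
        (by rw [Cardinal.mk_nat, Cardinal.lift_aleph0]; exact hunc) hlt
    obtain ⟨n, hn⟩ := hcof _ h1
    exact absurd (Ordinal.le_iSup f n) (not_le.2 hn)
  -- extract the clubs witnessing the hypotheses
  have hST' : ¬ IsStatIn (T \ statTrace S o) o := hST
  have hTU' : ¬ IsStatIn (U \ statTrace T o) o := hTU
  unfold IsStatIn at hST' hTU'
  push_neg at hST' hTU'
  obtain ⟨C₁, hC₁club, hC₁⟩ := hST'
  obtain ⟨C₂, hC₂club, hC₂⟩ := hTU'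
  -- the restricted club C₁'
  set C₁' : Set Ordinal := C₁ ∩ Set.Iio o with hC₁'def
  have hC₁'sub : C₁' ⊆ Set.Iio o := Set.inter_subset_right
  have hC₁'club : IsClubIn C₁' o := by
    constructor
    · intro x hx h0 hlim
      refine ⟨hC₁club.1 x hx h0 fun β hβ => ?_, hx⟩
      obtain ⟨γ, hγ, h1, h2⟩ := hlim β hβ
      exact ⟨γ, hγ.1, h1, h2⟩
    · intro β hβ
      obtain ⟨γ, hγ, h1, h2⟩ := hC₁club.2 β hβ
      exact ⟨γ, ⟨hγ, h2⟩, h1, h2⟩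
  -- the canonical closure function and its club of closure points
  set Zs : Set Ordinal := Set.Iio o \ S with hZsdef
  set F : Ordinal → Ordinal := Fop Zs C₁' with hFdef
  have hFlt : ∀ x < o, F x < o := fun x hx =>
    Fop_lt Set.diff_subset hC₁'sub holim hno hx
  have hFixclub : IsClubIn {x | x < o ∧ ∀ δ < x, F δ < x} o :=
    fix_club holim hno (Fop_mono Zs C₁') hFlt
  -- the main club
  have hCCclub : IsClubIn (accBelow C₁' o ∩ (C₂ ∩ {x | x < o ∧ ∀ δ < x, F δ < x})) o :=
    inter_club hno (acc_club hno hC₁'club) (inter_club hno hC₂club hFixclub)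
  obtain ⟨α, hαmem, hαCC⟩ := hstat _ hCCclub
  obtain ⟨hacc, hαC₂, hαFix⟩ := hαCC
  have hαo : α < o := hacc.1
  -- T ∩ α is stationary in α
  have hstatT : IsStatIn (T ∩ Set.Iio α) α := by
    by_contra h
    have : α ∈ (U \ statTrace T o) ∩ C₂ :=
      ⟨⟨hαmem.1, fun hmem => h hmem.2⟩, hαC₂⟩
    rw [hC₂] at this
    exact this
  -- derive the contradiction: α ∈ statTrace S o
  apply hαmem.2
  refine ⟨hαo, ?_⟩
  intro D hD
  by_contra hemp
  have hZsα : ∀ x < α, ∃ y ∈ Zs, x < y ∧ y < α := by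
    intro x hx
    obtain ⟨γ, hγD, hxγ, hγα⟩ := hD.2 x hx
    exact ⟨γ, ⟨lt_trans hγα hαo, fun hγS => hemp ⟨γ, ⟨hγS, hγα⟩, hγD⟩⟩, hxγ, hγα⟩
  have hC₁α : ∀ x < α, ∃ y ∈ C₁', x < y ∧ y < α := fun x hx => hacc.2.2 x hx
  by_cases hcase : ∃ f : ℕ → Ordinal, StrictMono f ∧ (∀ n, f n < α) ∧ ∀ β < α, ∃ n, β < f n
  · -- ω-cofinal case
    obtain ⟨f, hf, hflt, hfcof⟩ := hcase
    -- Step 1: T contains a tail of α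
    have htail : ∃ δ, δ < α ∧ ∀ x, δ < x → x < α → x ∈ T := by
      by_contra h
      push_neg at h
      set ZT : Set Ordinal := {x | x < α ∧ x ∉ T} with hZTdef
      have hZTw : ∀ x < α, ∃ y ∈ ZT, x < y ∧ y < α := by
        intro x hx
        obtain ⟨y, h1, h2, h3⟩ := h x hx
        exact ⟨y, ⟨h2, h3⟩, h1, h2⟩
      set t : ℕ → Ordinal :=
        fun n => Nat.rec (nextIn ZT (f 0)) (fun n x => nextIn ZT (max x (f (n + 1)))) n with htdef
      have htlt : ∀ n, t n ∈ ZT ∧ t n < α := by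
        intro n
        induction n with
        | zero => exact nextIn_spec (hZTw (f 0) (hflt 0))
        | succ n ih =>
          show nextIn ZT (max (t n) (f (n + 1))) ∈ ZT ∧ nextIn ZT (max (t n) (f (n + 1))) < α
          exact nextIn_spec (hZTw _ (max_lt ih.2 (hflt (n + 1))))
      have htmono : StrictMono t := strictMono_nat_of_lt_succ fun n =>
        lt_of_le_of_lt (le_max_left _ _) (lt_nextIn ZT _)
      have htcof : ∀ β < α, ∃ n, β < t n := by
        intro β hβ
        obtain ⟨n, hn⟩ := hfcof β hβ
        refine ⟨n + 1, lt_of_lt_of_le hn ?_⟩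
        exact le_trans (hf.monotone (Nat.le_succ n))
          (le_trans (le_max_right (t n) (f (n + 1))) (lt_nextIn ZT _).le)
      obtain ⟨z, hzT, hzR⟩ := hstatT (Set.range t)
        (range_omega_club htmono (fun n => (htlt n).2) htcof)
      obtain ⟨n, rfl⟩ := hzR
      exact (htlt n).1.2 hzT.1
    obtain ⟨δ, hδα, hδtail⟩ := htail
    -- Step 2: use the canonical closure point
    set w : ℕ → Ordinal := iseq Zs C₁' δ with hwdef
    have hwlt : ∀ n, w n < α := by
      intro n
      induction n with
      | zero => exact hδα
      | succ n ih =>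
        show iseq Zs C₁' δ (n + 1) < α
        rw [iseq_succ]
        exact (nextIn_spec (hC₁α _ (nextIn_spec (hZsα _ ih)).2)).2
    have hwsucc : ∀ n, w (n + 1) = nextIn C₁' (nextIn Zs (w n)) := fun n => iseq_succ _ _ _ _
    have hwC : ∀ n, w (n + 1) ∈ C₁' := by
      intro n
      rw [hwsucc]
      exact (nextIn_spec (hC₁α _ (nextIn_spec (hZsα _ (hwlt n))).2)).1
    have hsZ : ∀ n, nextIn Zs (w n) ∈ Zs ∧ nextIn Zs (w n) < α := fun n =>
      nextIn_spec (hZsα _ (hwlt n))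
    have hwmono : StrictMono w := iseq_strictMono Zs C₁' δ
    set lam : Ordinal := Fop Zs C₁' δ with hlamdef
    have hlamsup : lam = iSup w := rfl
    have hlamlt : lam < α := hαFix.2 δ hδα
    have hwle : ∀ n, w n ≤ lam := fun n => hlamsup ▸ Ordinal.le_iSup w n
    have hwltlam : ∀ n, w n < lam := fun n =>
      lt_of_lt_of_le (hwmono (Nat.lt_succ_self n)) (hwle (n + 1))
    have hlamcof : ∀ β < lam, ∃ n, β < w n := fun β hβ =>
      Ordinal.lt_iSup_iff.1 (hlamsup ▸ hβ)
    have hlam0 : 0 < lam := lt_of_le_of_lt (zero_le (a := w 0)) (hwltlam 0)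
    have hδlam : δ < lam := hwltlam 0
    have hlamC₁ : lam ∈ C₁ := by
      refine hC₁club.1 lam (lt_trans hlamlt hαo) hlam0 fun β hβ => ?_
      obtain ⟨n, hn⟩ := hlamcof β hβ
      exact ⟨w (n + 1), (hwC n).1, lt_of_lt_of_le hn (hwmono (Nat.lt_succ_self n)).le,
        hwltlam (n + 1)⟩
    have hlamT : lam ∈ T := hδtail lam hδlam hlamlt
    have hlamtrace : lam ∈ statTrace S o := by
      by_contra hcontra
      have : lam ∈ (T \ statTrace S o) ∩ C₁ := ⟨⟨hlamT, hcontra⟩, hlamC₁⟩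
      rw [hC₁] at this
      exact this
    obtain ⟨-, hlamstat⟩ := hlamtrace
    set s : ℕ → Ordinal := fun n => nextIn Zs (w n) with hsdef
    have hswlt : ∀ n, s n < w (n + 1) := fun n => by
      rw [hwsucc]; exact lt_nextIn C₁' (s n)
    have hsmono : StrictMono s := strictMono_nat_of_lt_succ fun n =>
      lt_trans (hswlt n) (lt_nextIn Zs (w (n + 1)))
    have hsltlam : ∀ n, s n < lam := fun n => lt_of_lt_of_le (hswlt n) (hwle (n + 1))
    have hscof : ∀ β < lam, ∃ n, β < s n := by
      intro β hβ
      obtain ⟨n, hn⟩ := hlamcof β hβ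
      exact ⟨n, lt_trans hn (lt_nextIn Zs (w n))⟩
    obtain ⟨z, hzS, hzR⟩ := hlamstat (Set.range s)
      (range_omega_club hsmono hsltlam hscof)
    obtain ⟨n, rfl⟩ := hzR
    exact (hsZ n).1.2 hzS.1
  · -- no ω-cofinal sequence in α
    have hnoα : NoOmegaSeq α := hcase
    have hC₁restrict : IsClubIn (C₁' ∩ Set.Iio α) α := by
      refine club_restrict (fun x hx h0 hc => ?_) hacc
      refine ⟨hC₁club.1 x hx h0 fun β hβ => ?_, hx⟩
      obtain ⟨γ, hγ, h1, h2⟩ := hc β hβ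
      exact ⟨γ, hγ.1, h1, h2⟩
    have hW : IsClubIn ((C₁' ∩ Set.Iio α) ∩ accBelow D α) α :=
      inter_club hnoα hC₁restrict (acc_club hnoα hD)
    obtain ⟨β, hβT, hβW⟩ := hstatT _ hW
    have hβtrace : β ∈ statTrace S o := by
      by_contra hcontra
      have : β ∈ (T \ statTrace S o) ∩ C₁ := ⟨⟨hβT.1, hcontra⟩, hβW.1.1.1⟩
      rw [hC₁] at this
      exact this
    obtain ⟨-, hβstat⟩ := hβtrace
    have hDβ : IsClubIn (D ∩ Set.Iio β) β := club_restrict hD.1 hβW.2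
    obtain ⟨z, hzS, hzD⟩ := hβstat _ hDβ
    exact hemp ⟨z, ⟨hzS.1, Set.mem_Iio.2 (lt_trans (Set.mem_Iio.1 hzD.2) (Set.mem_Iio.1 hβW.1.2))⟩, hzD.1⟩
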